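/- For |z| ≤ c, the complex exponential satisfies e^{iz} = ∑_{j=0}^k (iz)^j/j! + (i^{k+1}/k!) ∫_0^c [(z-u)_+^k e^{iu} + (-1)^{k-1}(-z-u)_+^k e^{-iu}] du. -/

import Mathlib

open MeasureTheory

/-- The truncated power function `z ↦ (z)_+^k` (Heaviside convention for `k = 0`). -/
noncomputable def tpow (k : ℕ) (z : ℝ) : ℝ := if 0 < z then z ^ k else 0

lemma exp_taylor_aux (k : ℕ) (z : ℝ) :
    Complex.exp (Complex.I * z)
      = (∑ j ∈ Finset.range (k + 1), (Complex.I * z) ^ j / (j.factorial : ℂ))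
        + (Complex.I ^ (k + 1) / (k.factorial : ℂ))
            * ∫ u in (0:ℝ)..z, (((z - u) ^ k : ℝ) : ℂ) * Complex.exp (Complex.I * u) := by
  induction k with
  | zero =>
      simp only [Finset.range_one, Finset.sum_singleton, pow_zero, Nat.factorial_zero,
        Nat.cast_one, div_one, pow_one, Complex.ofReal_one, one_mul, zero_add]
      rw [integral_exp_mul_complex Complex.I_ne_zero]
      simp only [Complex.ofReal_zero, mul_zero, Complex.exp_zero]
      have : (Complex.I : ℂ) ≠ 0 := Complex.I_ne_zero
      field_simp
      ring
  | succ k ih =>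
      have hcont1 : Continuous (fun x : ℝ => Complex.I * Complex.exp (Complex.I * x)) :=
        continuous_const.mul (Complex.continuous_exp.comp
          (continuous_const.mul Complex.continuous_ofReal))
      have hcont2 : Continuous (fun x : ℝ => (((z - x) ^ k : ℝ) : ℂ)) :=
        Complex.continuous_ofReal.comp ((continuous_const.sub continuous_id).pow k)
      have hu : ∀ x ∈ Set.uIcc (0:ℝ) z,
          HasDerivAt (fun y : ℝ => Complex.exp (Complex.I * y))
            (Complex.I * Complex.exp (Complex.I * x)) x := by
        intro x _
        have h0 : HasDerivAt (fun y : ℝ => (Complex.I * y : ℂ)) Complex.I x := by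
          simpa using ((hasDerivAt_id (x:ℝ)).ofReal_comp).const_mul Complex.I
        have h := (Complex.hasDerivAt_exp (Complex.I * x)).comp x h0
        rw [mul_comm] at h
        exact h
      have hv : ∀ x ∈ Set.uIcc (0:ℝ) z,
          HasDerivAt (fun y : ℝ => ((-(z - y) ^ (k+1) / (k+1) : ℝ) : ℂ))
            (((z - x) ^ k : ℝ) : ℂ) x := by
        intro x _
        have h1 : HasDerivAt (fun y : ℝ => -(z - y) ^ (k+1) / (k+1) : ℝ → ℝ)
            ((z - x) ^ k) x := by
          have h2 : HasDerivAt (fun y : ℝ => (z - y)) (-1) x := by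
            exact (hasDerivAt_id x).const_sub z
          have h3 := (h2.pow (k+1)).neg.div_const ((k+1 : ℝ))
          refine h3.congr_deriv ?_
          have : ((k:ℝ) + 1) ≠ 0 := by positivity
          rw [Nat.add_sub_cancel]
          push_cast
          field_simp
        exact h1.ofReal_comp
      have key := intervalIntegral.integral_mul_deriv_eq_deriv_mul hu hv
        (hcont1.intervalIntegrable 0 z) (hcont2.intervalIntegrable 0 z)
      -- rewrite sides of key
      have e1 : (∫ x in (0:ℝ)..z,
            Complex.I * Complex.exp (Complex.I * x) * ((-(z - x) ^ (k+1) / (k+1) : ℝ) : ℂ))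
          = (-(Complex.I / (k+1)))
            * ∫ x in (0:ℝ)..z, (((z - x) ^ (k+1) : ℝ) : ℂ) * Complex.exp (Complex.I * x) := by
        rw [← intervalIntegral.integral_const_mul]
        apply intervalIntegral.integral_congr
        intro x _
        push_cast
        ring
      have e2 : (∫ x in (0:ℝ)..z,
            Complex.exp (Complex.I * x) * (((z - x) ^ k : ℝ) : ℂ))
          = ∫ x in (0:ℝ)..z, (((z - x) ^ k : ℝ) : ℂ) * Complex.exp (Complex.I * x) := by
        apply intervalIntegral.integral_congr
        intro x _
        ring
      rw [e1, e2] at key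
      have parts : (∫ u in (0:ℝ)..z, (((z - u) ^ k : ℝ) : ℂ) * Complex.exp (Complex.I * u))
          = ((z ^ (k+1) : ℝ) : ℂ) / (k+1)
            + (Complex.I / (k+1))
              * ∫ u in (0:ℝ)..z, (((z - u) ^ (k+1) : ℝ) : ℂ) * Complex.exp (Complex.I * u) := by
        rw [key]
        push_cast
        simp [Complex.exp_zero]
        ring
      rw [ih, parts]
      conv_rhs => rw [Finset.sum_range_succ]
      have hfac : ((k+1).factorial : ℂ) = ((k:ℂ)+1) * (k.factorial : ℂ) := by
        push_cast [Nat.factorial_succ]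
        ring
      have hf0 : ((k.factorial : ℂ)) ≠ 0 := by
        exact_mod_cast Nat.cast_ne_zero.mpr (Nat.factorial_ne_zero k)
      have hk0 : ((k:ℂ)+1) ≠ 0 := Nat.cast_add_one_ne_zero k
      push_cast [hfac]
      field_simp
      ring


lemma tpow_intervalIntegrable (k : ℕ) (z a b : ℝ) {e : ℝ → ℂ} (he : Continuous e) :
    IntervalIntegrable (fun u => ((tpow k (z - u) : ℝ) : ℂ) * e u) volume a b := by
  have heq : (fun u => ((tpow k (z - u) : ℝ) : ℂ) * e u)
      = Set.indicator (Set.Iio z) (fun u => (((z - u) ^ k : ℝ) : ℂ) * e u) := by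
    funext u
    by_cases h : u < z <;>
      simp [tpow, Set.indicator, h, sub_pos, not_lt.mpr, lt_asymm]
  have hc : IntervalIntegrable (fun u => (((z - u) ^ k : ℝ) : ℂ) * e u) volume a b :=
    ((Complex.continuous_ofReal.comp ((continuous_const.sub continuous_id).pow k)).mul
      he).intervalIntegrable a b
  rw [heq, intervalIntegrable_iff] at *
  exact hc.indicator measurableSet_Iio

lemma ae_ne_real (z : ℝ) : ∀ᵐ (x : ℝ) ∂(volume : Measure ℝ), x ≠ z := by
  rw [MeasureTheory.ae_iff]
  simp only [ne_eq, not_not]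
  simpa using measure_singleton z

lemma integral_zero_of_eqOn {a b : ℝ} {F : ℝ → ℂ} (h : ∀ x ∈ Set.uIcc a b, F x = 0) :
    (∫ u in a..b, F u) = 0 := by
  have h' : Set.EqOn F (fun _ => (0:ℂ)) (Set.uIcc a b) := h
  rw [intervalIntegral.integral_congr h', intervalIntegral.integral_zero]

/-- Taylor expansion of `e^{iz}` with truncated-power integral remainder:
for `|z| ≤ c`,
`e^{iz} = ∑_{j=0}^k (iz)^j/j! + (i^{k+1}/k!) ∫₀^c [(z-u)_+^k e^{iu}
  + (-1)^{k-1}(-z-u)_+^k e^{-iu}] du`. -/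
theorem exp_taylor_truncated_power_remainder (k : ℕ) (z c : ℝ) (hz : |z| ≤ c) :
    Complex.exp (Complex.I * z)
      = (∑ j ∈ Finset.range (k + 1), (Complex.I * z) ^ j / (j.factorial : ℂ))
        + (Complex.I ^ (k + 1) / (k.factorial : ℂ))
            * ∫ u in (0:ℝ)..c,
                ((tpow k (z - u) : ℝ) : ℂ) * Complex.exp (Complex.I * u)
                  + (-1 : ℂ) ^ (k + 1) * ((tpow k (-z - u) : ℝ) : ℂ)
                      * Complex.exp (-(Complex.I * u)) := by
  have hc0 : (0:ℝ) ≤ c := le_trans (abs_nonneg z) hz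
  set f : ℝ → ℂ := fun u => ((tpow k (z - u) : ℝ) : ℂ) * Complex.exp (Complex.I * u) with hf
  set g : ℝ → ℂ := fun u => ((tpow k (-z - u) : ℝ) : ℂ) * Complex.exp (-(Complex.I * u)) with hg
  have hfi : ∀ a b : ℝ, IntervalIntegrable f volume a b := fun a b =>
    tpow_intervalIntegrable k z a b
      (Complex.continuous_exp.comp (continuous_const.mul Complex.continuous_ofReal))
  have hgi : ∀ a b : ℝ, IntervalIntegrable g volume a b := fun a b =>
    tpow_intervalIntegrable k (-z) a b
      (Complex.continuous_exp.comp (continuous_const.mul Complex.continuous_ofReal).neg)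
  have hsplit : (∫ u in (0:ℝ)..c, f u + (-1:ℂ)^(k+1) * ((tpow k (-z - u) : ℝ) : ℂ)
        * Complex.exp (-(Complex.I * u)))
      = (∫ u in (0:ℝ)..c, f u) + (-1:ℂ)^(k+1) * ∫ u in (0:ℝ)..c, g u := by
    rw [← intervalIntegral.integral_const_mul, ← intervalIntegral.integral_add (hfi 0 c)
      ((hgi 0 c).const_mul _)]
    apply intervalIntegral.integral_congr
    intro x _
    simp [hg, mul_assoc]
  have key : (∫ u in (0:ℝ)..c, f u) + (-1:ℂ)^(k+1) * (∫ u in (0:ℝ)..c, g u)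
      = ∫ u in (0:ℝ)..z, (((z - u) ^ k : ℝ) : ℂ) * Complex.exp (Complex.I * u) := by
    rcases le_or_gt 0 z with hz0 | hz0
    · have hzc : z ≤ c := le_trans (le_abs_self z) hz
      have hgz : (∫ u in (0:ℝ)..c, g u) = 0 := by
        apply integral_zero_of_eqOn
        intro x hx
        rw [Set.uIcc_of_le hc0] at hx
        have h2 : ¬ x < -z := not_lt.mpr (by linarith [hx.1])
        simp [hg, tpow, h2]
      have hf2 : (∫ u in z..c, f u) = 0 := by
        apply integral_zero_of_eqOn
        intro x hx
        rw [Set.uIcc_of_le hzc] at hx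
        have h2 : ¬ x < z := not_lt.mpr (by linarith [hx.1])
        simp [hf, tpow, h2]
      have hf1 : (∫ u in (0:ℝ)..z, f u)
          = ∫ u in (0:ℝ)..z, (((z - u) ^ k : ℝ) : ℂ) * Complex.exp (Complex.I * u) := by
        apply intervalIntegral.integral_congr_ae
        filter_upwards [ae_ne_real z] with x hx hmem
        rw [Set.uIoc_of_le hz0] at hmem
        have hlt : x < z := lt_of_le_of_ne hmem.2 hx
        simp [hf, tpow, sub_pos, hlt]
      rw [hgz, mul_zero, add_zero, ← intervalIntegral.integral_add_adjacent_intervals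
        (hfi 0 z) (hfi z c), hf2, add_zero, hf1]
    · have hzc : -z ≤ c := le_trans (neg_le_abs z) hz
      have hfz : (∫ u in (0:ℝ)..c, f u) = 0 := by
        apply integral_zero_of_eqOn
        intro x hx
        rw [Set.uIcc_of_le hc0] at hx
        have h2 : ¬ x < z := not_lt.mpr (by linarith [hx.1])
        simp [hf, tpow, h2]
      have hg2 : (∫ u in (-z)..c, g u) = 0 := by
        apply integral_zero_of_eqOn
        intro x hx
        rw [Set.uIcc_of_le hzc] at hx
        have h2 : ¬ x < -z := not_lt.mpr (by linarith [hx.1])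
        simp [hg, tpow, h2]
      have hg1 : (∫ u in (0:ℝ)..(-z), g u)
          = ∫ u in (0:ℝ)..(-z), (((-z - u) ^ k : ℝ) : ℂ) * Complex.exp (-(Complex.I * u)) := by
        apply intervalIntegral.integral_congr_ae
        filter_upwards [ae_ne_real (-z)] with x hx hmem
        rw [Set.uIoc_of_le (by linarith : (0:ℝ) ≤ -z)] at hmem
        have hlt : x < -z := lt_of_le_of_ne hmem.2 hx
        simp [hg, tpow, sub_pos, hlt]
      have hsub : (∫ u in (0:ℝ)..(-z), (((-z - u) ^ k : ℝ) : ℂ) * Complex.exp (-(Complex.I * u)))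
          = -((-1:ℂ)^k * ∫ u in (0:ℝ)..z,
              (((z - u) ^ k : ℝ) : ℂ) * Complex.exp (Complex.I * u)) := by
        have hcomp := intervalIntegral.integral_comp_neg (a := z) (b := (0:ℝ))
          (f := fun u : ℝ => (((-z - u) ^ k : ℝ) : ℂ) * Complex.exp (-(Complex.I * u)))
        rw [neg_zero] at hcomp
        rw [← hcomp, intervalIntegral.integral_symm, neg_inj,
          ← intervalIntegral.integral_const_mul]
        apply intervalIntegral.integral_congr
        intro x _
        push_cast
        rw [show ((-(z:ℂ)) - -(x:ℂ)) = -((z:ℂ) - x) by ring, neg_pow,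
          show -(Complex.I * -(x:ℂ)) = Complex.I * x by ring]
        ring
      rw [hfz, zero_add, ← intervalIntegral.integral_add_adjacent_intervals
        (hgi 0 (-z)) (hgi (-z) c), hg2, add_zero, hg1, hsub]
      rw [show ((-1:ℂ)^(k+1) * -((-1:ℂ)^k * ∫ u in (0:ℝ)..z,
          (((z - u) ^ k : ℝ) : ℂ) * Complex.exp (Complex.I * u)))
        = ((-1:ℂ)^(k+1) * (-1:ℂ)^(k+1)) * ∫ u in (0:ℝ)..z,
          (((z - u) ^ k : ℝ) : ℂ) * Complex.exp (Complex.I * u) by ring]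
      rw [← pow_add, show k+1+(k+1) = 2*(k+1) by ring, pow_mul]
      norm_num
  rw [hsplit, key]
  exact exp_taylor_aux k z
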